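/- Let $\alpha$ be a root of an irreducible polynomial of degree $D+1$ over $\F_p$ in the extension $\E = \F_p[z]/(g)$, and let $G \in \F_p[y]^{n\times n}$ have monomial entries $G_{i,j} = y^{e_{i,j}}$ with all $t$-wise sums of the exponents distinct and at most $D$. Let $M \in \E^{n\times n}$ be obtained by substituting $y = \alpha$. Then $\Gamma_{t,\F_p}(M) = \binom{n^2}{t}$. -/

import Mathlib

theorem stmt15 (p : ℕ) [Fact p.Prime] (D n t : ℕ) (ht : 0 < t)
    (g : Polynomial (ZMod p)) (hg : Irreducible g) (hdeg : g.natDegree = D + 1)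
    (e : Fin n × Fin n → ℕ)
    (hsidon : ∀ T T' : Finset (Fin n × Fin n), T.card = t → T'.card = t →
      (∑ q ∈ T, e q) = (∑ q ∈ T', e q) → T = T')
    (hbound : ∀ T : Finset (Fin n × Fin n), T.card = t → (∑ q ∈ T, e q) ≤ D)
    (M : Matrix (Fin n) (Fin n) (AdjoinRoot g))
    (hM : ∀ i j, M i j = AdjoinRoot.root g ^ e (i, j)) :
    Module.rank (ZMod p) ↥(Submodule.span (ZMod p)
      {x : AdjoinRoot g | ∃ T : Finset (Fin n × Fin n), T.card = t ∧
        x = ∏ q ∈ T, M q.1 q.2}) = (Nat.choose (n ^ 2) t : Cardinal) := by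
  have hg0 : g ≠ 0 := hg.ne_zero
  set pb := AdjoinRoot.powerBasis hg0 with hpb
  set ι := {T : Finset (Fin n × Fin n) // T.card = t}
  have hflt : ∀ T : ι, (∑ q ∈ T.1, e q) < g.natDegree := by
    intro T
    rw [hdeg]
    exact Nat.lt_succ_of_le (hbound T.1 T.2)
  set f : ι → Fin g.natDegree := fun T => ⟨∑ q ∈ T.1, e q, hflt T⟩
  set v : ι → AdjoinRoot g := fun T => AdjoinRoot.root g ^ (∑ q ∈ T.1, e q)
  have hvb : ∀ T, v T = pb.basis (f T) := by
    intro T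
    rw [show pb.basis (f T) = pb.gen ^ ((f T : ℕ)) from pb.basis_eq_pow (f T)]
    rfl
  have hfinj : Function.Injective f := by
    intro T T' h
    exact Subtype.ext (hsidon T.1 T'.1 T.2 T'.2 (by simpa [f, Fin.mk.injEq] using h))
  have hli : LinearIndependent (ZMod p) v := by
    rw [show v = pb.basis ∘ f from funext hvb]
    exact pb.basis.linearIndependent.comp f hfinj
  have hset : {x : AdjoinRoot g | ∃ T : Finset (Fin n × Fin n), T.card = t ∧
      x = ∏ q ∈ T, M q.1 q.2} = Set.range v := by
    ext x
    constructor
    · rintro ⟨T, hT, rfl⟩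
      refine ⟨⟨T, hT⟩, ?_⟩
      simp only [v]
      rw [← Finset.prod_pow_eq_pow_sum]
      exact Finset.prod_congr rfl fun q _ => (hM q.1 q.2).symm
    · rintro ⟨T, rfl⟩
      refine ⟨T.1, T.2, ?_⟩
      simp only [v]
      rw [← Finset.prod_pow_eq_pow_sum]
      exact Finset.prod_congr rfl fun q _ => (hM q.1 q.2).symm
  rw [hset, rank_span hli, Cardinal.mk_range_eq _ hli.injective]
  rw [Cardinal.mk_fintype]
  norm_cast
  show Fintype.card {T : Finset (Fin n × Fin n) // T.card = t} = _
  rw [Fintype.card_finset_len]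
  congr 1
  simp [sq]
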